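/- Let F = k⟨x_1,...,x_n⟩ be the free algebra over a commutative ring k and let Φ ∈ F be a linear combination of words w such that each word appearing in Φ is weighted homogeneous of weighted degree N with respect to positive integer weights w_1,...,w_n (the weight of a word is the sum of the weights of its letters). Then Σ_{i=1}^n w_i · x_i · D_i(Φ) ≡ N · Φ modulo the k-submodule spanned by commutators [F,F]. -/

import Mathlib

noncomputable section

variable {k : Type*} [CommRing k] {n : ℕ}

/-- The cyclic rotation of a word that puts position `j+1` at the front,
deleting the letter at position `j`. -/
def cycRot (w : List (Fin n)) (j : ℕ) : List (Fin n) :=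
  w.drop (j + 1) ++ w.take j

/-- The cyclic derivative of a single word with respect to the `i`-th variable. -/
def cycDerivWord (k : Type*) [CommRing k] {n : ℕ} (i : Fin n) (w : List (Fin n)) :
    MonoidAlgebra k (FreeMonoid (Fin n)) :=
  (((List.range w.length).filter fun j => w[j]? = some i).map
    fun j => MonoidAlgebra.single (FreeMonoid.ofList (cycRot w j)) (1 : k)).sum

/-- The cyclic derivative with respect to the `i`-th variable, as a `k`-linear map. -/
def cycDeriv (k : Type*) [CommRing k] {n : ℕ} (i : Fin n) :
    MonoidAlgebra k (FreeMonoid (Fin n)) →ₗ[k] MonoidAlgebra k (FreeMonoid (Fin n)) :=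
  Finsupp.lsum k (fun w =>
    LinearMap.toSpanSingleton k _ (cycDerivWord k i (FreeMonoid.toList w)))
    ∘ₗ (MonoidAlgebra.coeffLinearEquiv k).toLinearMap

/-- The weight of a word: the sum of the weights of its letters. -/
def wordWeight (w : Fin n → ℕ) (u : FreeMonoid (Fin n)) : ℕ :=
  ((FreeMonoid.toList u).map w).sum

/-- Filtered-map list sum as an if-sum over `Finset.range`. -/
lemma listsum_filter_eq {M : Type*} [AddCommMonoid M] (m : ℕ) (p : ℕ → Bool) (f : ℕ → M) :
    (((List.range m).filter p).map f).sum = ∑ j ∈ Finset.range m, if p j then f j else 0 := by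
  induction m with
  | zero => simp
  | succ m ih =>
    rw [List.range_succ, List.filter_append, List.map_append, List.sum_append, ih,
      Finset.sum_range_succ]
    by_cases h : p m <;> simp [h]

/-- Rewriting `cycDerivWord` as a sum over `Fin`. -/
lemma cycDerivWord_eq (i : Fin n) (L : List (Fin n)) :
    cycDerivWord k i L
      = ∑ j : Fin L.length,
          if L[(j : ℕ)] = i then MonoidAlgebra.single (FreeMonoid.ofList (cycRot L j)) (1 : k)
          else 0 := by
  rw [cycDerivWord, listsum_filter_eq, ← Fin.sum_univ_eq_sum_range]
  refine Finset.sum_congr rfl fun j _ => ?_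
  have h : L[(j : ℕ)]? = some L[(j : ℕ)] := List.getElem?_eq_getElem j.isLt
  simp [h]

lemma rot_mem (a b : List (Fin n)) :
    MonoidAlgebra.single (FreeMonoid.ofList (a ++ b)) (1 : k)
      - MonoidAlgebra.single (FreeMonoid.ofList (b ++ a)) (1 : k)
    ∈ Submodule.span k
        {x : MonoidAlgebra k (FreeMonoid (Fin n)) | ∃ f g, x = f * g - g * f} := by
  apply Submodule.subset_span
  refine ⟨MonoidAlgebra.single (FreeMonoid.ofList a) 1,
    MonoidAlgebra.single (FreeMonoid.ofList b) 1, ?_⟩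
  rw [MonoidAlgebra.single_mul_single, MonoidAlgebra.single_mul_single, one_mul,
    ← FreeMonoid.ofList_append, ← FreeMonoid.ofList_append]

lemma key_word (w : Fin n → ℕ) (L : List (Fin n)) :
    ∑ i, (w i : k) •
        (MonoidAlgebra.single (FreeMonoid.of i) (1 : k) * cycDerivWord k i L)
        - ((((L.map w).sum : ℕ) : k)) • MonoidAlgebra.single (FreeMonoid.ofList L) (1 : k)
      ∈ Submodule.span k
          {x : MonoidAlgebra k (FreeMonoid (Fin n)) | ∃ f g, x = f * g - g * f} := by
  have h1 : ∑ i, (w i : k) •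
      (MonoidAlgebra.single (FreeMonoid.of i) (1 : k) * cycDerivWord k i L)
      = ∑ j : Fin L.length, (w L[(j : ℕ)] : k) •
          MonoidAlgebra.single (FreeMonoid.ofList (L.drop (j : ℕ) ++ L.take (j : ℕ))) (1 : k) := by
    simp only [cycDerivWord_eq, Finset.mul_sum, Finset.smul_sum, mul_ite, mul_zero, smul_ite,
      smul_zero]
    rw [Finset.sum_comm]
    refine Finset.sum_congr rfl fun j _ => ?_
    rw [Finset.sum_ite_eq Finset.univ L[(j : ℕ)]
      (fun i => (w i : k) • (MonoidAlgebra.single (FreeMonoid.of i) (1 : k) *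
        MonoidAlgebra.single (FreeMonoid.ofList (cycRot L j)) (1 : k)))]
    simp only [Finset.mem_univ, if_true]
    congr 1
    rw [MonoidAlgebra.single_mul_single, one_mul]
    congr 1
    show FreeMonoid.ofList [L[(j : ℕ)]] * FreeMonoid.ofList (cycRot L (j : ℕ)) = _
    rw [← FreeMonoid.ofList_append, cycRot]
    congr 1
    rw [← List.append_assoc, List.singleton_append, ← List.drop_eq_getElem_cons j.isLt]
  have h2 : ((((L.map w).sum : ℕ) : k)) • MonoidAlgebra.single (FreeMonoid.ofList L) (1 : k)
      = ∑ j : Fin L.length, (w L[(j : ℕ)] : k) •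
          MonoidAlgebra.single (FreeMonoid.ofList L) (1 : k) := by
    rw [← Finset.sum_smul]
    congr 1
    rw [← Nat.cast_sum]
    congr 1
    exact (Fin.sum_univ_fun_getElem L w).symm
  rw [h1, h2, ← Finset.sum_sub_distrib]
  apply Submodule.sum_mem
  intro j _
  rw [← smul_sub]
  apply Submodule.smul_mem
  have := rot_mem (k := k) (L.drop (j : ℕ)) (L.take (j : ℕ))
  rwa [List.take_append_drop] at this

theorem noncommutative_euler_identity
    (w : Fin n → ℕ) (hw : ∀ i, 0 < w i) (N : ℕ)
    (Φ : MonoidAlgebra k (FreeMonoid (Fin n)))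
    (hΦ : ∀ u ∈ Φ.coeff.support, wordWeight w u = N) :
    ∑ i, (w i : k) •
        (MonoidAlgebra.single (FreeMonoid.of i) (1 : k) * cycDeriv k i Φ)
        - (N : k) • Φ
      ∈ Submodule.span k
          {x : MonoidAlgebra k (FreeMonoid (Fin n)) | ∃ f g, x = f * g - g * f} := by
  classical
  have hcd : ∀ i, cycDeriv k i Φ
      = ∑ u ∈ Φ.coeff.support, Φ.coeff u • cycDerivWord k i (FreeMonoid.toList u) := by
    intro i
    simp only [cycDeriv, LinearMap.coe_comp, Function.comp_apply, LinearEquiv.coe_coe,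
      MonoidAlgebra.coeffLinearEquiv_apply, Finsupp.coe_lsum, LinearMap.toSpanSingleton_apply]
    rfl
  have hΦeq : Φ = ∑ u ∈ Φ.coeff.support, Φ.coeff u • MonoidAlgebra.single u (1 : k) := by
    conv_lhs => rw [← MonoidAlgebra.sum_coeff_single Φ]
    refine Finset.sum_congr rfl fun u _ => ?_
    rw [MonoidAlgebra.smul_single, smul_eq_mul, mul_one]
  have h1 : ∑ i, (w i : k) •
      (MonoidAlgebra.single (FreeMonoid.of i) (1 : k) * cycDeriv k i Φ)
      = ∑ u ∈ Φ.coeff.support, Φ.coeff u • ∑ i, (w i : k) •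
          (MonoidAlgebra.single (FreeMonoid.of i) (1 : k)
            * cycDerivWord k i (FreeMonoid.toList u)) := by
    simp only [hcd, Finset.mul_sum, Finset.smul_sum]
    rw [Finset.sum_comm]
    refine Finset.sum_congr rfl fun u _ => Finset.sum_congr rfl fun i _ => ?_
    rw [mul_smul_comm, smul_comm]
  have h2 : (N : k) • Φ = ∑ u ∈ Φ.coeff.support, Φ.coeff u •
      ((N : k) • MonoidAlgebra.single u (1 : k)) := by
    conv_lhs => rw [hΦeq]
    rw [Finset.smul_sum]
    refine Finset.sum_congr rfl fun u _ => smul_comm _ _ _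
  rw [h1, h2, ← Finset.sum_sub_distrib]
  apply Submodule.sum_mem
  intro u hu
  rw [← smul_sub]
  apply Submodule.smul_mem
  have h3 := key_word (k := k) w (FreeMonoid.toList u)
  rw [FreeMonoid.ofList_toList] at h3
  rwa [← hΦ u hu, wordWeight]

end
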